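/- For primes p and integers b ≥ 2 with p dividing b + 1, define σ°(b, p) = (1/3)(2b−2) p^(2b−1)(p² − 1). Then σ°(b, p) is a positive integer divisible by 16, and the minimum of σ°(b, p) over all admissible pairs (b, p) is 128, attained at (b, p) = (3, 2). -/
import Mathlib

theorem stmt_17 (p b : ℕ) (hp : p.Prime) (hb : 2 ≤ b) (hdvd : p ∣ b + 1) :
    3 ∣ (2 * b - 2) * p ^ (2 * b - 1) * (p ^ 2 - 1) ∧
    0 < (2 * b - 2) * p ^ (2 * b - 1) * (p ^ 2 - 1) / 3 ∧
    16 ∣ (2 * b - 2) * p ^ (2 * b - 1) * (p ^ 2 - 1) / 3 ∧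
    128 ≤ (2 * b - 2) * p ^ (2 * b - 1) * (p ^ 2 - 1) / 3 ∧
    (2 * 3 - 2) * 2 ^ (2 * 3 - 1) * (2 ^ 2 - 1) / 3 = 128 := by
  have hp2 := hp.two_le
  by_cases hp2' : p = 2
  · subst hp2'
    obtain ⟨c, hc⟩ := hdvd
    obtain ⟨k, hk⟩ : ∃ k, b = 2 * k + 3 := ⟨c - 2, by omega⟩
    subst hk
    have h1 : 2 * (2 * k + 3) - 2 = 4 * k + 4 := by omega
    have h2 : 2 * (2 * k + 3) - 1 = 4 * k + 5 := by omega
    rw [h1, h2]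
    have h3 : (4 * k + 4) * 2 ^ (4 * k + 5) * (2 ^ 2 - 1) = 3 * ((4 * k + 4) * 2 ^ (4 * k + 5)) := by
      ring_nf
    rw [h3, Nat.mul_div_cancel_left _ (by norm_num)]
    have hpow : (32 : ℕ) ≤ 2 ^ (4 * k + 5) := by
      calc (32 : ℕ) = 2 ^ 5 := by norm_num
      _ ≤ 2 ^ (4 * k + 5) := Nat.pow_le_pow_right (by norm_num) (by omega)
    refine ⟨⟨(4 * k + 4) * 2 ^ (4 * k + 5), rfl⟩, by positivity, ?_, ?_, by norm_num⟩
    · have he : (4 * k + 4) * 2 ^ (4 * k + 5) = 16 * ((k + 1) * 2 ^ (4 * k + 3)) := by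
        have : 2 ^ (4 * k + 5) = 2 ^ 2 * 2 ^ (4 * k + 3) := by
          rw [← pow_add]; congr 1; omega
        rw [this]; ring
      exact ⟨_, he⟩
    · calc (128 : ℕ) = 4 * 32 := by norm_num
      _ ≤ (4 * k + 4) * 2 ^ (4 * k + 5) := Nat.mul_le_mul (by omega) hpow
  · -- p odd, p ≥ 3
    have hp3 : 3 ≤ p := by
      rcases Nat.lt_or_ge p 3 with h | h
      · interval_cases p <;> simp_all
      · exact h
    obtain ⟨m, hm⟩ := hp.odd_of_ne_two hp2'
    have hm1 : 1 ≤ m := by omega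
    obtain ⟨t, ht⟩ := Nat.even_mul_succ_self m
    have ht1 : 1 ≤ t := by nlinarith
    have h8 : p ^ 2 - 1 = 8 * t := by
      have : p ^ 2 = 8 * t + 1 := by subst hm; nlinarith [ht]
      omega
    -- 3 ∣ σ
    have h3 : 3 ∣ (2 * b - 2) * p ^ (2 * b - 1) * (p ^ 2 - 1) := by
      by_cases hp3' : p = 3
      · subst hp3'
        refine Dvd.dvd.mul_right (Dvd.dvd.mul_left ?_ _) _
        exact dvd_pow_self 3 (by omega)
      · refine Dvd.dvd.mul_left ?_ _
        have hnd : ¬ (3 ∣ p) := fun h =>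
          hp3' (((Nat.prime_dvd_prime_iff_eq (by norm_num) hp).mp h).symm)
        have hmod : p ^ 2 % 3 = 1 := by
          rw [Nat.pow_mod]
          have : p % 3 = 1 ∨ p % 3 = 2 := by omega
          rcases this with h | h <;> rw [h]
        have hpos : 1 ≤ p ^ 2 := Nat.one_le_pow _ _ (by omega)
        omega
    -- 16 ∣ σ
    have h16 : 16 ∣ (2 * b - 2) * p ^ (2 * b - 1) * (p ^ 2 - 1) := by
      refine ⟨(b - 1) * p ^ (2 * b - 1) * t, ?_⟩
      rw [h8]
      have : 2 * b - 2 = 2 * (b - 1) := by omega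
      rw [this]; ring
    have h48 : 48 ∣ (2 * b - 2) * p ^ (2 * b - 1) * (p ^ 2 - 1) :=
      Nat.Coprime.mul_dvd_of_dvd_of_dvd (by norm_num) h3 h16
    obtain ⟨u, hu⟩ := h48
    -- σ ≥ 432
    have hσ : 432 ≤ (2 * b - 2) * p ^ (2 * b - 1) * (p ^ 2 - 1) := by
      have hpowb : (27 : ℕ) ≤ p ^ (2 * b - 1) := by
        calc (27 : ℕ) = 3 ^ 3 := by norm_num
        _ ≤ p ^ 3 := Nat.pow_le_pow_left hp3 3
        _ ≤ p ^ (2 * b - 1) := Nat.pow_le_pow_right (by omega) (by omega)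
      calc (432 : ℕ) = 2 * 27 * 8 := by norm_num
      _ ≤ (2 * b - 2) * p ^ (2 * b - 1) * (p ^ 2 - 1) := by
          refine Nat.mul_le_mul (Nat.mul_le_mul (by omega) hpowb) ?_
          omega
    have hu9 : 9 ≤ u := by omega
    have hdiv : (2 * b - 2) * p ^ (2 * b - 1) * (p ^ 2 - 1) / 3 = 16 * u := by
      rw [hu]
      have : 48 * u = 3 * (16 * u) := by ring
      rw [this, Nat.mul_div_cancel_left _ (by norm_num)]
    refine ⟨h3, ?_, ?_, ?_, by norm_num⟩
    · rw [hdiv]; omega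
    · rw [hdiv]; exact ⟨u, rfl⟩
    · rw [hdiv]; omega
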